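/- Let P be a group all of whose elements have order a power of a prime p, containing an abelian subgroup A of finite index, and let Q < P be any proper subgroup. Then Q is strictly contained in its normalizer N_P(Q). -/

import Mathlib

/-- Finite-index case: in a group of p-power-order elements, a proper subgroup
of finite index is strictly contained in its normalizer. -/
private theorem aux_finiteIndex {p : ℕ} [Fact p.Prime] {G : Type*} [Group G]
    (hG : IsPGroup p G) (Q : Subgroup G) (hQ : Q ≠ ⊤) (hfi : Q.FiniteIndex) :
    Q < Subgroup.normalizer (Q : Set G) := by
  haveI := hfi
  set K := Q.normalCore with hK
  haveI : K.FiniteIndex := Subgroup.finiteIndex_normalCore Q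
  haveI : Finite (G ⧸ K) := Subgroup.finite_quotient_of_finiteIndex
  have hpq : IsPGroup p (G ⧸ K) := hG.to_quotient K
  haveI : Group.IsNilpotent (G ⧸ K) := hpq.isNilpotent
  have hNC := normalizerCondition_of_isNilpotent (G := G ⧸ K)
  set π := QuotientGroup.mk' K with hπ
  have hker : (π : G →* G ⧸ K).ker = K := QuotientGroup.ker_mk' K
  have hKQ : K ≤ Q := Subgroup.normalCore_le Q
  have hcomap : (Q.map π).comap π = Q := by
    rw [Subgroup.comap_map_eq, hker, sup_of_le_left hKQ]
  have hmapne : Q.map π ≠ ⊤ := by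
    intro h
    apply hQ
    have : (Q.map π).comap π = (⊤ : Subgroup (G ⧸ K)).comap π := by rw [h]
    rw [hcomap, Subgroup.comap_top] at this
    exact this
  have hlt := hNC (Q.map π) (lt_top_iff_ne_top.mpr hmapne)
  obtain ⟨x, hxN, hxQ⟩ := SetLike.exists_of_lt hlt
  obtain ⟨g, rfl⟩ := QuotientGroup.mk'_surjective K x
  have hgQ : g ∉ Q := by
    intro hg
    exact hxQ ⟨g, hg, rfl⟩
  have hgable : ∀ h : G, h ∈ Q ↔ h ∈ (Q.map π).comap π := by
    intro h; rw [hcomap]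
  have hgN : g ∈ Subgroup.normalizer (Q : Set G) := by
    rw [Subgroup.mem_normalizer_iff]
    intro h
    rw [hgable h, hgable (g * h * g⁻¹)]
    simp only [Subgroup.mem_comap, map_mul, map_inv]
    exact Subgroup.mem_normalizer_iff.mp hxN (π h)
  exact lt_of_le_of_ne Subgroup.le_normalizer (fun h => hgQ (h ▸ hgN))

theorem stmt_2 (p : ℕ) [Fact p.Prime] {P : Type*} [Group P] (hP : IsPGroup p P)
    (A : Subgroup P) (hA : ∀ a ∈ A, ∀ b ∈ A, a * b = b * a) (hAfi : A.FiniteIndex)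
    (Q : Subgroup P) (hQ : Q ≠ ⊤) :
    Q < Subgroup.normalizer (Q : Set P) := by
  haveI := hAfi
  -- replace A by its normal core
  set A₀ := A.normalCore with hA₀def
  haveI : A₀.FiniteIndex := Subgroup.finiteIndex_normalCore A
  have hA₀le : A₀ ≤ A := Subgroup.normalCore_le A
  have hA₀ : ∀ a ∈ A₀, ∀ b ∈ A₀, a * b = b * a :=
    fun a ha b hb => hA a (hA₀le ha) b (hA₀le hb)
  haveI hA₀n : A₀.Normal := Subgroup.normalCore_normal A
  by_cases hle : A₀ ≤ Q
  · exact aux_finiteIndex hP Q hQ (Subgroup.finiteIndex_of_le hle)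
  · obtain ⟨a, ha, haQ⟩ := SetLike.not_le_iff_exists.mp hle
    -- the set of Q-conjugates of a
    set S : Set P := (fun q => q * a * q⁻¹) '' (Q : Set P) with hSdef
    have haS : a ∈ S := ⟨1, Q.one_mem, by group⟩
    have hSA : S ⊆ (A₀ : Set P) := by
      rintro _ ⟨q, hq, rfl⟩
      exact hA₀n.conj_mem a ha q
    -- S is finite
    -- S is finite
    have hdvd : A₀.relIndex Q ∣ A₀.index := Subgroup.relIndex_dvd_index_of_normal A₀ Q
    have hrelne : A₀.relIndex Q ≠ 0 := fun h =>
      Subgroup.FiniteIndex.index_ne_zero (zero_dvd_iff.mp (h ▸ hdvd))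
    haveI : (A₀.subgroupOf Q).FiniteIndex := ⟨hrelne⟩
    haveI : Finite (Q ⧸ A₀.subgroupOf Q) := Subgroup.finite_quotient_of_finiteIndex
    have hSfin : S.Finite := by
      have hwd : ∀ q₁ q₂ : Q, (QuotientGroup.leftRel (A₀.subgroupOf Q)).r q₁ q₂ →
          ((q₁ : P) * a * (q₁ : P)⁻¹) = ((q₂ : P) * a * (q₂ : P)⁻¹) := by
        intro q₁ q₂ h
        rw [QuotientGroup.leftRel_apply] at h
        have hc : ((q₁⁻¹ * q₂ : Q) : P) ∈ A₀ := h
        set c : P := (q₁ : P)⁻¹ * (q₂ : P) with hcdef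
        have hcA : c ∈ A₀ := hc
        have hq₂ : (q₂ : P) = (q₁ : P) * c := by rw [hcdef]; group
        have hcomm : c * a = a * c := hA₀ c hcA a ha
        rw [hq₂, mul_inv_rev]
        have h1 : (q₁ : P) * c * a * (c⁻¹ * (q₁ : P)⁻¹)
            = (q₁ : P) * (c * a * c⁻¹) * (q₁ : P)⁻¹ := by group
        rw [h1, hcomm]
        group
      let f : Q ⧸ A₀.subgroupOf Q → P :=
        Quotient.lift (fun q : Q => (q : P) * a * (q : P)⁻¹) hwd
      have hsub : S ⊆ Set.range f := by
        rintro _ ⟨q, hq, rfl⟩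
        exact ⟨Quotient.mk _ (⟨q, hq⟩ : Q), rfl⟩
      exact (Set.finite_range f).subset hsub
    -- W = closure of S
    set W := Subgroup.closure S with hWdef
    have hWA : W ≤ A₀ := (Subgroup.closure_le A₀).mpr hSA
    have haW : a ∈ W := Subgroup.subset_closure haS
    -- Q-invariance of S and W
    have hSinv : ∀ q ∈ Q, ∀ s ∈ S, q * s * q⁻¹ ∈ S := by
      rintro q hq _ ⟨q', hq', rfl⟩
      exact ⟨q * q', Q.mul_mem hq hq', by group⟩
    have hWinv : ∀ q ∈ Q, ∀ w ∈ W, q * w * q⁻¹ ∈ W := by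
      intro q hq w hw
      refine Subgroup.closure_induction ?_ ?_ ?_ ?_ hw
      · intro s hs; exact Subgroup.subset_closure (hSinv q hq s hs)
      · simpa using W.one_mem
      · intro x y _ _ hx hy
        have : q * (x * y) * q⁻¹ = (q * x * q⁻¹) * (q * y * q⁻¹) := by group
        rw [this]; exact W.mul_mem hx hy
      · intro x _ hx
        have : q * x⁻¹ * q⁻¹ = (q * x * q⁻¹)⁻¹ := by group
        rw [this]; exact W.inv_mem hx
    -- W is a finite group
    haveI : Finite W := by
      letI : CommGroup W :=
        { (inferInstance : Group W) with
          mul_comm := fun x y => Subtype.ext (hA₀ x (hWA x.2) y (hWA y.2)) }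
      have hfg : W.FG := (Subgroup.fg_iff W).mpr ⟨S, rfl, hSfin⟩
      haveI : Group.FG W := (Group.fg_iff_subgroup_fg W).mpr hfg
      have htor : Monoid.IsTorsion W := by
        intro x
        obtain ⟨k, hk⟩ := hP (x : P)
        refine isOfFinOrder_iff_pow_eq_one.mpr ⟨p ^ k, pow_pos (Fact.out : p.Prime).pos k, ?_⟩
        ext
        push_cast
        exact hk
      exact CommGroup.finite_of_fg_torsion W htor
    -- H = Q ⊔ W ; every element of H is of the form w * q
    set H := Q ⊔ W with hHdef
    have hQH : Q ≤ H := le_sup_left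
    have hWH : W ≤ H := le_sup_right
    let T : Subgroup P :=
      { carrier := {h | ∃ w ∈ W, ∃ q ∈ Q, h = w * q}
        one_mem' := ⟨1, W.one_mem, 1, Q.one_mem, by group⟩
        mul_mem' := by
          rintro x y ⟨w₁, hw₁, q₁, hq₁, rfl⟩ ⟨w₂, hw₂, q₂, hq₂, rfl⟩
          exact ⟨w₁ * (q₁ * w₂ * q₁⁻¹), W.mul_mem hw₁ (hWinv q₁ hq₁ w₂ hw₂),
            q₁ * q₂, Q.mul_mem hq₁ hq₂, by group⟩
        inv_mem' := by
          rintro x ⟨w, hw, q, hq, rfl⟩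
          exact ⟨q⁻¹ * w⁻¹ * q, by simpa using hWinv q⁻¹ (Q.inv_mem hq) w⁻¹ (W.inv_mem hw),
            q⁻¹, Q.inv_mem hq, by group⟩ }
    have hHT : H ≤ T := sup_le
      (fun q hq => ⟨1, W.one_mem, q, hq, by group⟩)
      (fun w hw => ⟨w, hw, 1, Q.one_mem, by group⟩)
    -- Q has finite index in H
    set Q' := Q.subgroupOf H with hQ'def
    haveI : Finite (H ⧸ Q') := by
      have hsurj : Function.Surjective
          (fun w : W => QuotientGroup.mk (s := Q') ⟨(w : P), hWH w.2⟩) := by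
        intro x
        obtain ⟨⟨h, hh⟩, rfl⟩ := QuotientGroup.mk_surjective x
        obtain ⟨w, hw, q, hq, hdec⟩ := hHT hh
        refine ⟨⟨w, hw⟩, ?_⟩
        refine (QuotientGroup.eq ).mpr ?_
        show ((⟨w, hWH hw⟩ : H)⁻¹ * ⟨h, hh⟩ : H) ∈ Q.subgroupOf H
        rw [Subgroup.mem_subgroupOf]
        show w⁻¹ * h ∈ Q
        rw [hdec]
        simpa using hq
      exact Finite.of_surjective _ hsurj
    haveI : Q'.FiniteIndex := Subgroup.finiteIndex_of_finite_quotient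
    -- apply the finite index case inside H
    have hQ'ne : Q' ≠ ⊤ := by
      intro h
      apply haQ
      have : (⟨a, hWH haW⟩ : H) ∈ Q' := h ▸ Subgroup.mem_top _
      exact (Subgroup.mem_subgroupOf).mp this
    have hlt := aux_finiteIndex (hP.to_subgroup H) Q' hQ'ne inferInstance
    obtain ⟨x, hxN, hxQ'⟩ := SetLike.exists_of_lt hlt
    have hxQ : (x : P) ∉ Q := fun h => hxQ' ((Subgroup.mem_subgroupOf).mpr h)
    have hxnorm : (x : P) ∈ Subgroup.normalizer (Q : Set P) := by
      rw [Subgroup.mem_normalizer_iff]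
      intro h
      constructor
      · intro hh
        have hhH : h ∈ H := hQH hh
        have : (⟨h, hhH⟩ : H) ∈ Q' := (Subgroup.mem_subgroupOf).mpr hh
        have := (Subgroup.mem_normalizer_iff.mp hxN ⟨h, hhH⟩).mp this
        exact (Subgroup.mem_subgroupOf).mp this
      · intro hh
        have hconjH : (x : P) * h * (x : P)⁻¹ ∈ H := hQH hh
        have hhH : h ∈ H := by
          have : h = (x : P)⁻¹ * ((x : P) * h * (x : P)⁻¹) * (x : P) := by group
          rw [this]
          exact H.mul_mem (H.mul_mem (H.inv_mem x.2) hconjH) x.2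
        have hmem : (x * ⟨h, hhH⟩ * x⁻¹ : H) ∈ Q' := by
          rw [Subgroup.mem_subgroupOf]
          exact hh
        have := (Subgroup.mem_normalizer_iff.mp hxN ⟨h, hhH⟩).mpr hmem
        exact (Subgroup.mem_subgroupOf).mp this
    exact lt_of_le_of_ne Subgroup.le_normalizer (fun h => hxQ (h ▸ hxnorm))
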